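/- arXiv:1401.5613 — 3 statements merged into one kernel-verified Lean document; each statement's English description precedes it below -/
import Mathlib

section
/- Factorization of the joint density: in the notation below, for every n ≥ 1, every 0 ≤ l < n and every (x₀, …, x_n) ∈ E^{n+1} such that S(x₀, …, x_{n−l−1}) ≠ 0, setting α := 1 − (1 − π) p^{n−l−1} L₀(x₀, …, x_{n−l−1}) / S(x₀, …, x_{n−l−1}), one has S(x₀, …, x_n) = S(x₀, …, x_{n−l−1}) · G_{l+1}(x_{n−l−1}, …, x_n, α). -/
open Finset

noncomputable section

/-- `L_m(x_k, …, x_N) = ∏_{r=k+1}^{N-m} f⁰(x_{r-1}, x_r) · ∏_{r=N-m+1}^{N} f¹(x_{r-1}, x_r)`. -/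
def Lfn {E : Type*} (f0 f1 : E → E → ℝ) (k N m : ℕ) (xv : ℕ → E) : ℝ :=
  (∏ r ∈ Finset.Icc (k + 1) (N - m), f0 (xv (r - 1)) (xv r)) *
    ∏ r ∈ Finset.Icc (N - m + 1) N, f1 (xv (r - 1)) (xv r)

/-- `S(x₀, …, x_m) = π L_m + (1-π)(∑_{i=1}^m p^{i-1} q L_{m-i+1} + p^m L₀)`. -/
def Sfn {E : Type*} (f0 f1 : E → E → ℝ) (p π : ℝ) (m : ℕ) (xv : ℕ → E) : ℝ :=
  π * Lfn f0 f1 0 m m xv +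
    (1 - π) * ((∑ i ∈ Finset.Icc 1 m, p ^ (i - 1) * (1 - p) * Lfn f0 f1 0 m (m - i + 1) xv) +
      p ^ m * Lfn f0 f1 0 m 0 xv)

/-- `G_{l+1}(x_k, …, x_{k+l+1}, α) = α L_{l+1} + (1-α)(∑_{i=0}^{l} p^{l-i} q L_{i+1} + p^{l+1} L₀)`. -/
def Gfn {E : Type*} (f0 f1 : E → E → ℝ) (p : ℝ) (k l : ℕ) (xv : ℕ → E) (α : ℝ) : ℝ :=
  α * Lfn f0 f1 k (k + l + 1) (l + 1) xv +
    (1 - α) *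
      ((∑ i ∈ Finset.range (l + 1), p ^ (l - i) * (1 - p) * Lfn f0 f1 k (k + l + 1) (i + 1) xv) +
        p ^ (l + 1) * Lfn f0 f1 k (k + l + 1) 0 xv)

/-- The posterior probability `Π_m = 1 - (1-π) p^m L₀(x₀,…,x_m) / S(x₀,…,x_m)`. -/
def PiPost {E : Type*} (f0 f1 : E → E → ℝ) (p π : ℝ) (m : ℕ) (xv : ℕ → E) : ℝ :=
  1 - (1 - π) * p ^ m * Lfn f0 f1 0 m 0 xv / Sfn f0 f1 p π m xv

end

open Finset in
lemma split_lo {E : Type*} (f0 f1 : E → E → ℝ) (k l m : ℕ) (hm : m ≤ l + 1) (xv : ℕ → E) :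
    Lfn f0 f1 0 (k+l+1) m xv = Lfn f0 f1 0 k 0 xv * Lfn f0 f1 k (k+l+1) m xv := by
  unfold Lfn
  have e1 : Finset.Icc (k - 0 + 1) k = ∅ := Finset.Icc_eq_empty (by omega)
  rw [e1, Finset.prod_empty, mul_one]
  have hsplit : (∏ r ∈ Icc (0+1) (k+l+1-m), f0 (xv (r-1)) (xv r))
      = (∏ r ∈ Icc (0+1) (k-0), f0 (xv (r-1)) (xv r)) *
        ∏ r ∈ Icc (k+1) (k+l+1-m), f0 (xv (r-1)) (xv r) := by
    rw [Finset.Icc_add_one_left_eq_Ioc, Finset.Icc_add_one_left_eq_Ioc, Finset.Icc_add_one_left_eq_Ioc, Nat.sub_zero,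
        Finset.prod_Ioc_consecutive _ (Nat.zero_le k) (by omega)]
  rw [hsplit]; ring

open Finset in
lemma split_hi {E : Type*} (f0 f1 : E → E → ℝ) (k l j : ℕ) (hj : j ≤ k) (xv : ℕ → E) :
    Lfn f0 f1 0 (k+l+1) (l+1+j) xv = Lfn f0 f1 0 k j xv * Lfn f0 f1 k (k+l+1) (l+1) xv := by
  unfold Lfn
  have e0 : k + l + 1 - (l + 1 + j) = k - j := by omega
  have e1 : k + l + 1 - (l + 1) = k := by omega
  rw [e0, e1]
  have e2 : Finset.Icc (k+1) k = ∅ := Finset.Icc_eq_empty (by omega)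
  rw [e2, Finset.prod_empty, one_mul]
  have hsplit : (∏ r ∈ Icc (k-j+1) (k+l+1), f1 (xv (r-1)) (xv r))
      = (∏ r ∈ Icc (k-j+1) k, f1 (xv (r-1)) (xv r)) *
        ∏ r ∈ Icc (k+1) (k+l+1), f1 (xv (r-1)) (xv r) := by
    rw [Finset.Icc_add_one_left_eq_Ioc, Finset.Icc_add_one_left_eq_Ioc, Finset.Icc_add_one_left_eq_Ioc,
        Finset.prod_Ioc_consecutive _ (by omega : k - j ≤ k) (by omega)]
  rw [hsplit]; ring

open Finset in
lemma keylem {E : Type*} (f0 f1 : E → E → ℝ) (p π : ℝ) (k l : ℕ) (xv : ℕ → E) :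
    Sfn f0 f1 p π (k+l+1) xv =
      (Sfn f0 f1 p π k xv - (1-π)*(p^k*Lfn f0 f1 0 k 0 xv)) * Lfn f0 f1 k (k+l+1) (l+1) xv
      + (1-π)*(p^k*Lfn f0 f1 0 k 0 xv) *
        ((∑ i ∈ Finset.range (l+1), p^(l-i)*(1-p)*Lfn f0 f1 k (k+l+1) (i+1) xv)
          + p^(l+1)*Lfn f0 f1 k (k+l+1) 0 xv) := by
  unfold Sfn
  have hsum : (∑ i ∈ Icc 1 (k+l+1), p^(i-1)*(1-p)*Lfn f0 f1 0 (k+l+1) (k+l+1-i+1) xv)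
      = (∑ i ∈ Icc 1 k, p^(i-1)*(1-p)*Lfn f0 f1 0 (k+l+1) (k+l+1-i+1) xv)
        + ∑ j ∈ Finset.range (l+1),
            p^(k+1+j-1)*(1-p)*Lfn f0 f1 0 (k+l+1) (k+l+1-(k+1+j)+1) xv := by
    have h01 : ∀ m : ℕ, Finset.Icc 1 m = Finset.Ioc 0 m := by
      intro m; ext r; simp; omega
    rw [h01, h01, ← Finset.sum_Ioc_consecutive _ (Nat.zero_le k) (by omega : k ≤ k+l+1)]
    congr 1
    have h2 : Finset.Ioc k (k+l+1) = Finset.Ico (k+1) (k+l+2) := by ext r; simp; omega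
    rw [h2, Finset.sum_Ico_eq_sum_range]
    apply Finset.sum_congr (by rw [show k+l+2-(k+1) = l+1 by omega]) (fun j hj => rfl)
  have hAk : Lfn f0 f1 0 (k+l+1) (k+l+1) xv
      = Lfn f0 f1 0 k k xv * Lfn f0 f1 k (k+l+1) (l+1) xv := by
    have h := split_hi f0 f1 k l k le_rfl xv
    rwa [show l+1+k = k+l+1 by ring] at h
  have hA : ∀ i ∈ Icc 1 k, p^(i-1)*(1-p)*Lfn f0 f1 0 (k+l+1) (k+l+1-i+1) xv
      = (p^(i-1)*(1-p)*Lfn f0 f1 0 k (k-i+1) xv) * Lfn f0 f1 k (k+l+1) (l+1) xv := by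
    intro i hi
    simp only [Finset.mem_Icc] at hi
    rw [show k+l+1-i+1 = l+1+(k-i+1) by omega, split_hi f0 f1 k l (k-i+1) (by omega) xv]
    ring
  have hB : ∀ j ∈ Finset.range (l+1),
      p^(k+1+j-1)*(1-p)*Lfn f0 f1 0 (k+l+1) (k+l+1-(k+1+j)+1) xv
      = (p^k * Lfn f0 f1 0 k 0 xv) * (p^j*(1-p)*Lfn f0 f1 k (k+l+1) (l-j+1) xv) := by
    intro j hj
    simp only [Finset.mem_range] at hj
    rw [show k+l+1-(k+1+j)+1 = l-j+1 by omega, split_lo f0 f1 k l (l-j+1) (by omega) xv,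
        show k+1+j-1 = k+j by omega, pow_add]
    ring
  have hB0 : Lfn f0 f1 0 (k+l+1) 0 xv
      = Lfn f0 f1 0 k 0 xv * Lfn f0 f1 k (k+l+1) 0 xv :=
    split_lo f0 f1 k l 0 (by omega) xv
  have href : (∑ i ∈ Finset.range (l+1), p^(l-i)*(1-p)*Lfn f0 f1 k (k+l+1) (i+1) xv)
      = ∑ j ∈ Finset.range (l+1), p^j*(1-p)*Lfn f0 f1 k (k+l+1) (l-j+1) xv := by
    rw [← Finset.sum_range_reflect]
    apply Finset.sum_congr rfl
    intro j hj
    simp only [Finset.mem_range] at hj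
    rw [show l+1-1-j = l-j by omega, show l-(l-j) = j by omega]
  rw [hAk, hsum, Finset.sum_congr rfl hA, Finset.sum_congr rfl hB, hB0, href,
      ← Finset.sum_mul, ← Finset.mul_sum,
      show k+l+1 = k+(l+1) by ring, pow_add]
  ring

/-- Factorization of the joint density: for `0 ≤ l < n` and
`α = 1 - (1-π) p^{n-l-1} L₀(x₀,…,x_{n-l-1}) / S(x₀,…,x_{n-l-1})`, one has
`S(x₀,…,x_n) = S(x₀,…,x_{n-l-1}) · G_{l+1}(x_{n-l-1},…,x_n, α)`. -/

theorem stmt6 {E : Type*} (f0 f1 : E → E → ℝ) (p π : ℝ)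
    (hp : p ∈ Set.Ioo (0 : ℝ) 1) (hπ : π ∈ Set.Ioo (0 : ℝ) 1)
    (n l : ℕ) (hn : 1 ≤ n) (hl : l < n) (xv : ℕ → E)
    (hS : Sfn f0 f1 p π (n - l - 1) xv ≠ 0) :
    Sfn f0 f1 p π n xv =
      Sfn f0 f1 p π (n - l - 1) xv *
        Gfn f0 f1 p (n - l - 1) l xv
          (1 - (1 - π) * p ^ (n - l - 1) * Lfn f0 f1 0 (n - l - 1) 0 xv /
            Sfn f0 f1 p π (n - l - 1) xv) := by
  obtain ⟨hp0, hp1⟩ := hp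
  set k := n - l - 1 with hk
  have hnk : n = k + l + 1 := by omega
  rw [hnk, keylem f0 f1 p π k l xv]
  unfold Gfn
  field_simp
  ring
end

section
/- Recursive formula for the posterior: in the notation below, for every n ≥ 1, every 0 ≤ l < n and every (x₀, …, x_n) ∈ E^{n+1} with S(x₀, …, x_{n−l−1}) ≠ 0 and S(x₀, …, x_n) ≠ 0, defining Π_m := 1 − (1 − π) p^m L₀(x₀, …, x_m) / S(x₀, …, x_m), one has Π_n = (Π_{n−l−1} L_{l+1}(x_{n−l−1}, …, x_n) + (1 − Π_{n−l−1}) q ∑_{k=0}^{l} p^{l−k} L_{k+1}(x_{n−l−1}, …, x_n)) / G_{l+1}(x_{n−l−1}, …, x_n, Π_{n−l−1}). -/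
open Finset

lemma prod_Icc_split (g : ℕ → ℝ) {a b c : ℕ} (h1 : a ≤ b) (h2 : b ≤ c) :
    ∏ r ∈ Finset.Icc (a + 1) c, g r =
      (∏ r ∈ Finset.Icc (a + 1) b, g r) * ∏ r ∈ Finset.Icc (b + 1) c, g r := by
  rw [Finset.Icc_add_one_left_eq_Ioc, Finset.Icc_add_one_left_eq_Ioc, Finset.Icc_add_one_left_eq_Ioc,
    Finset.prod_Ioc_consecutive _ h1 h2]

/-- splitting for small `m`: `L_m(x₀..x_{k+l+1}) = L₀(x₀..x_k) · L_m(x_k..x_{k+l+1})` -/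
lemma Lsplit_lo {E : Type*} (f0 f1 : E → E → ℝ) (k l m : ℕ) (xv : ℕ → E) (hm : m ≤ l + 1) :
    Lfn f0 f1 0 (k + l + 1) m xv = Lfn f0 f1 0 k 0 xv * Lfn f0 f1 k (k + l + 1) m xv := by
  unfold Lfn
  rw [show (k : ℕ) - 0 = k from rfl,
    show Finset.Icc (k + 1) k = (∅ : Finset ℕ) from Finset.Icc_eq_empty (by omega),
    Finset.prod_empty,
    prod_Icc_split (fun r => f0 (xv (r - 1)) (xv r)) (Nat.zero_le k)
      (show k ≤ k + l + 1 - m by omega)]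
  ring

/-- splitting for large `m`: `L_{l+1+j}(x₀..x_{k+l+1}) = L_j(x₀..x_k) · L_{l+1}(x_k..x_{k+l+1})` -/
lemma Lsplit_hi {E : Type*} (f0 f1 : E → E → ℝ) (k l j : ℕ) (xv : ℕ → E) (hj : j ≤ k) :
    Lfn f0 f1 0 (k + l + 1) (l + 1 + j) xv =
      Lfn f0 f1 0 k j xv * Lfn f0 f1 k (k + l + 1) (l + 1) xv := by
  unfold Lfn
  rw [show k + l + 1 - (l + 1 + j) = k - j from by omega,
    show k + l + 1 - (l + 1) = k from by omega,
    show Finset.Icc (k + 1) k = (∅ : Finset ℕ) from Finset.Icc_eq_empty (by omega),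
    Finset.prod_empty,
    show k - j + 1 = (k - j) + 1 from rfl,
    prod_Icc_split (fun r => f1 (xv (r - 1)) (xv r)) (show k - j ≤ k by omega)
      (show k ≤ k + l + 1 by omega)]
  ring

lemma Ssplit {E : Type*} (f0 f1 : E → E → ℝ) (p π : ℝ) (k l : ℕ) (xv : ℕ → E) :
    Sfn f0 f1 p π (k + l + 1) xv =
      (π * Lfn f0 f1 0 k k xv +
          (1 - π) * ∑ i ∈ Finset.Icc 1 k, p ^ (i - 1) * (1 - p) * Lfn f0 f1 0 k (k - i + 1) xv) *
        Lfn f0 f1 k (k + l + 1) (l + 1) xv +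
      (1 - π) * p ^ k * Lfn f0 f1 0 k 0 xv *
        ((∑ i ∈ Finset.range (l + 1),
            p ^ (l - i) * (1 - p) * Lfn f0 f1 k (k + l + 1) (i + 1) xv) +
          p ^ (l + 1) * Lfn f0 f1 k (k + l + 1) 0 xv) := by
  unfold Sfn
  -- top likelihood
  have hLn : Lfn f0 f1 0 (k + l + 1) (k + l + 1) xv =
      Lfn f0 f1 0 k k xv * Lfn f0 f1 k (k + l + 1) (l + 1) xv := by
    have h := Lsplit_hi f0 f1 k l k xv le_rfl
    rwa [show l + 1 + k = k + l + 1 from by omega] at h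
  -- L₀ splits
  have hL0 : Lfn f0 f1 0 (k + l + 1) 0 xv =
      Lfn f0 f1 0 k 0 xv * Lfn f0 f1 k (k + l + 1) 0 xv :=
    Lsplit_lo f0 f1 k l 0 xv (by omega)
  -- split the sum
  have hsplit : ∑ i ∈ Finset.Icc 1 (k + l + 1),
      p ^ (i - 1) * (1 - p) * Lfn f0 f1 0 (k + l + 1) (k + l + 1 - i + 1) xv =
      (∑ i ∈ Finset.Icc 1 k,
        p ^ (i - 1) * (1 - p) * Lfn f0 f1 0 (k + l + 1) (k + l + 1 - i + 1) xv) +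
      ∑ i ∈ Finset.Icc (k + 1) (k + l + 1),
        p ^ (i - 1) * (1 - p) * Lfn f0 f1 0 (k + l + 1) (k + l + 1 - i + 1) xv := by
    rw [show Finset.Icc 1 (k + l + 1) = Finset.Ioc 0 (k + l + 1) from
        Finset.Icc_add_one_left_eq_Ioc (a := 0) (b := k + l + 1),
      show Finset.Icc 1 k = Finset.Ioc 0 k from Finset.Icc_add_one_left_eq_Ioc (a := 0) (b := k),
      Finset.Icc_add_one_left_eq_Ioc,
      Finset.sum_Ioc_consecutive _ (Nat.zero_le k) (show k ≤ k + l + 1 by omega)]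
  -- first part of the sum
  have hsum1 : ∑ i ∈ Finset.Icc 1 k,
      p ^ (i - 1) * (1 - p) * Lfn f0 f1 0 (k + l + 1) (k + l + 1 - i + 1) xv =
      (∑ i ∈ Finset.Icc 1 k, p ^ (i - 1) * (1 - p) * Lfn f0 f1 0 k (k - i + 1) xv) *
        Lfn f0 f1 k (k + l + 1) (l + 1) xv := by
    rw [Finset.sum_mul]
    refine Finset.sum_congr rfl ?_
    intro i hi
    rw [Finset.mem_Icc] at hi
    have h := Lsplit_hi f0 f1 k l (k - i + 1) xv (by omega)
    rw [show k + l + 1 - i + 1 = l + 1 + (k - i + 1) from by omega, h]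
    ring
  -- second part of the sum
  have hsum2 : ∑ i ∈ Finset.Icc (k + 1) (k + l + 1),
      p ^ (i - 1) * (1 - p) * Lfn f0 f1 0 (k + l + 1) (k + l + 1 - i + 1) xv =
      p ^ k * Lfn f0 f1 0 k 0 xv *
        ∑ i ∈ Finset.range (l + 1),
          p ^ (l - i) * (1 - p) * Lfn f0 f1 k (k + l + 1) (i + 1) xv := by
    rw [← Finset.Ico_add_one_right_eq_Icc, Finset.sum_Ico_eq_sum_range,
      show k + l + 1 + 1 - (k + 1) = l + 1 from by omega, Finset.mul_sum,
      ← Finset.sum_range_reflect (fun i => p ^ k * Lfn f0 f1 0 k 0 xv *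
        (p ^ (l - i) * (1 - p) * Lfn f0 f1 k (k + l + 1) (i + 1) xv)) (l + 1)]
    refine Finset.sum_congr rfl ?_
    intro t ht
    rw [Finset.mem_range] at ht
    have ht' : t ≤ l := by omega
    have h := Lsplit_lo f0 f1 k l (l - t + 1) xv (by omega)
    rw [show k + l + 1 - (k + 1 + t) + 1 = l - t + 1 from by omega,
      show k + 1 + t - 1 = k + t from by omega, h,
      show l + 1 - 1 - t = l - t from by omega,
      show l - (l - t) = t from by omega,
      show l - t + 1 = (l - t) + 1 from rfl]
    rw [pow_add]
    ring
  rw [hLn, hL0, hsplit, hsum1, hsum2, pow_add]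
  ring

/-- Recursive formula for the posterior: for `0 ≤ l < n`, with
`Π_m = 1 - (1-π) p^m L₀(x₀,…,x_m)/S(x₀,…,x_m)`,
`Π_n = (Π_{n-l-1} L_{l+1} + (1-Π_{n-l-1}) q ∑_{k=0}^{l} p^{l-k} L_{k+1}) / G_{l+1}(⋯, Π_{n-l-1})`,
all `L`'s evaluated at `(x_{n-l-1}, …, x_n)`. -/
theorem stmt10 {E : Type*} (f0 f1 : E → E → ℝ) (p π : ℝ)
    (hp : p ∈ Set.Ioo (0 : ℝ) 1) (hπ : π ∈ Set.Ioo (0 : ℝ) 1)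
    (n l : ℕ) (hn : 1 ≤ n) (hl : l < n) (xv : ℕ → E)
    (hS1 : Sfn f0 f1 p π (n - l - 1) xv ≠ 0) (hS2 : Sfn f0 f1 p π n xv ≠ 0) :
    PiPost f0 f1 p π n xv =
      (PiPost f0 f1 p π (n - l - 1) xv * Lfn f0 f1 (n - l - 1) n (l + 1) xv +
          (1 - PiPost f0 f1 p π (n - l - 1) xv) * (1 - p) *
            ∑ k ∈ Finset.range (l + 1), p ^ (l - k) * Lfn f0 f1 (n - l - 1) n (k + 1) xv) /
        Gfn f0 f1 p (n - l - 1) l xv (PiPost f0 f1 p π (n - l - 1) xv) := by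
  obtain ⟨k, rfl⟩ : ∃ k, n = k + l + 1 := ⟨n - l - 1, by omega⟩
  have hk : k + l + 1 - l - 1 = k := by omega
  rw [hk] at hS1 ⊢
  set Pk := PiPost f0 f1 p π k xv with hPk
  -- basic relation: Sₖ (1 - Pk) = (1-π) pᵏ L₀(x₀..x_k)
  have h1 : Sfn f0 f1 p π k xv * (1 - Pk) = (1 - π) * p ^ k * Lfn f0 f1 0 k 0 xv := by
    rw [hPk]
    unfold PiPost
    field_simp
    ring
  have hSk : Sfn f0 f1 p π k xv = π * Lfn f0 f1 0 k k xv +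
      (1 - π) * ((∑ i ∈ Finset.Icc 1 k, p ^ (i - 1) * (1 - p) * Lfn f0 f1 0 k (k - i + 1) xv) +
        p ^ k * Lfn f0 f1 0 k 0 xv) := rfl
  -- main recursion for S
  have hG : Sfn f0 f1 p π k xv * Gfn f0 f1 p k l xv Pk = Sfn f0 f1 p π (k + l + 1) xv := by
    rw [Ssplit]
    unfold Gfn
    linear_combination
      Lfn f0 f1 k (k + l + 1) (l + 1) xv * hSk +
      ((∑ i ∈ Finset.range (l + 1),
          p ^ (l - i) * (1 - p) * Lfn f0 f1 k (k + l + 1) (i + 1) xv) +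
        p ^ (l + 1) * Lfn f0 f1 k (k + l + 1) 0 xv -
        Lfn f0 f1 k (k + l + 1) (l + 1) xv) * h1
  have hGne : Gfn f0 f1 p k l xv Pk ≠ 0 := by
    intro h
    apply hS2
    rw [← hG, h, mul_zero]
  have hL0 : Lfn f0 f1 0 (k + l + 1) 0 xv =
      Lfn f0 f1 0 k 0 xv * Lfn f0 f1 k (k + l + 1) 0 xv :=
    Lsplit_lo f0 f1 k l 0 xv (by omega)
  have hsum : (1 - p) * ∑ i ∈ Finset.range (l + 1),
      p ^ (l - i) * Lfn f0 f1 k (k + l + 1) (i + 1) xv =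
      ∑ i ∈ Finset.range (l + 1),
        p ^ (l - i) * (1 - p) * Lfn f0 f1 k (k + l + 1) (i + 1) xv := by
    rw [Finset.mul_sum]
    exact Finset.sum_congr rfl fun i _ => by ring
  -- numerator identity
  have key : Sfn f0 f1 p π (k + l + 1) xv - (1 - π) * p ^ (k + l + 1) *
      Lfn f0 f1 0 (k + l + 1) 0 xv =
      (Pk * Lfn f0 f1 k (k + l + 1) (l + 1) xv + (1 - Pk) * (1 - p) *
        ∑ i ∈ Finset.range (l + 1), p ^ (l - i) * Lfn f0 f1 k (k + l + 1) (i + 1) xv) *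
        Sfn f0 f1 p π k xv := by
    rw [← hG, hL0]
    unfold Gfn
    linear_combination p ^ (l + 1) * Lfn f0 f1 k (k + l + 1) 0 xv * h1 -
        Sfn f0 f1 p π k xv * (1 - Pk) * hsum
  unfold PiPost
  rw [eq_div_iff hGne, sub_mul, one_mul]
  have hfrac : (1 - π) * p ^ (k + l + 1) * Lfn f0 f1 0 (k + l + 1) 0 xv /
      Sfn f0 f1 p π (k + l + 1) xv * Gfn f0 f1 p k l xv Pk =
      ((1 - π) * p ^ (k + l + 1) * Lfn f0 f1 0 (k + l + 1) 0 xv *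
        Gfn f0 f1 p k l xv Pk) / Sfn f0 f1 p π (k + l + 1) xv := by
    ring
  rw [hfrac]
  field_simp
  linear_combination Gfn f0 f1 p k l xv Pk * key +
    (Pk * Lfn f0 f1 k (k + l + 1) (l + 1) xv + (1 - Pk) * (1 - p) *
      ∑ i ∈ Finset.range (l + 1), p ^ (l - i) * Lfn f0 f1 k (k + l + 1) (i + 1) xv) * hG
end

section
/- One-step posterior update: in the notation below, for every n ≥ 1 and every (x₀, …, x_{n+1}) ∈ E^{n+2} with S(x₀, …, x_n) ≠ 0 and S(x₀, …, x_{n+1}) ≠ 0, defining Π_m := 1 − (1 − π) p^m L₀(x₀, …, x_m) / S(x₀, …, x_m), one has Π_{n+1} = f¹(x_n, x_{n+1}) (q + p Π_n) / G₁(x_n, x_{n+1}, Π_n), where G₁(z, y, α) = α f¹(z, y) + (1 − α)(q f¹(z, y) + p f⁰(z, y)). -/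
open Finset

/-- `G₁(z, y, α) = α f¹(z,y) + (1-α)(q f¹(z,y) + p f⁰(z,y))`. -/
def G1fn {E : Type*} (f0 f1 : E → E → ℝ) (p : ℝ) (z y : E) (α : ℝ) : ℝ :=
  α * f1 z y + (1 - α) * ((1 - p) * f1 z y + p * f0 z y)

/-- One-step posterior update: with
`Π_m = 1 - (1-π) p^m L₀(x₀,…,x_m)/S(x₀,…,x_m)`,
`Π_{n+1} = f¹(x_n, x_{n+1})(q + p Π_n) / G₁(x_n, x_{n+1}, Π_n)`. -/
theorem stmt11 {E : Type*} (f0 f1 : E → E → ℝ) (p π : ℝ)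
    (hp : p ∈ Set.Ioo (0 : ℝ) 1) (hπ : π ∈ Set.Ioo (0 : ℝ) 1)
    (n : ℕ) (hn : 1 ≤ n) (xv : ℕ → E)
    (hS1 : Sfn f0 f1 p π n xv ≠ 0) (hS2 : Sfn f0 f1 p π (n + 1) xv ≠ 0) :
    PiPost f0 f1 p π (n + 1) xv =
      f1 (xv n) (xv (n + 1)) * ((1 - p) + p * PiPost f0 f1 p π n xv) /
        G1fn f0 f1 p (xv n) (xv (n + 1)) (PiPost f0 f1 p π n xv) := by
  have Lstep1 : ∀ m, m ≤ n → Lfn f0 f1 0 (n+1) (m+1) xv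
      = Lfn f0 f1 0 n m xv * f1 (xv n) (xv (n+1)) := by
    intro m hm
    unfold Lfn
    have h1 : n + 1 - (m + 1) = n - m := by omega
    rw [h1, Finset.prod_Icc_succ_top (by omega : n - m + 1 ≤ n + 1)]
    simp only [Nat.add_sub_cancel]
    ring
  have Lstep0 : Lfn f0 f1 0 (n+1) 0 xv = Lfn f0 f1 0 n 0 xv * f0 (xv n) (xv (n+1)) := by
    unfold Lfn
    simp only [Nat.sub_zero]
    rw [Finset.Icc_eq_empty (by omega : ¬ (n + 1 + 1 ≤ n + 1)),
        Finset.Icc_eq_empty (by omega : ¬ (n + 1 ≤ n)),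
        Finset.prod_empty,
        Finset.prod_Icc_succ_top (by omega : 0 + 1 ≤ n + 1)]
    simp only [Nat.add_sub_cancel]
    ring
  set L0 := Lfn f0 f1 0 n 0 xv with hL0
  have Sstep : Sfn f0 f1 p π (n+1) xv
      = f1 (xv n) (xv (n+1)) * (Sfn f0 f1 p π n xv - (1-π) * p^(n+1) * L0)
        + (1-π) * p^(n+1) * L0 * f0 (xv n) (xv (n+1)) := by
    unfold Sfn
    rw [Finset.sum_Icc_succ_top (by omega : 1 ≤ n + 1)]
    have hsum : ∀ i ∈ Finset.Icc 1 n,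
        p ^ (i-1) * (1-p) * Lfn f0 f1 0 (n+1) (n+1-i+1) xv
        = p ^ (i-1) * (1-p) * Lfn f0 f1 0 n (n-i+1) xv * f1 (xv n) (xv (n+1)) := by
      intro i hi
      simp only [Finset.mem_Icc] at hi
      have h3 : n + 1 - i + 1 = (n - i + 1) + 1 := by omega
      rw [h3, Lstep1 _ (by omega)]
      ring
    rw [Finset.sum_congr rfl hsum, ← Finset.sum_mul]
    have h1 : n + 1 - (n+1) + 1 = 0 + 1 := by omega
    rw [h1, Lstep1 0 (by omega), Lstep0, Lstep1 n le_rfl]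
    simp only [Nat.add_sub_cancel, ← hL0]
    ring
  have hG : G1fn f0 f1 p (xv n) (xv (n+1)) (PiPost f0 f1 p π n xv) * Sfn f0 f1 p π n xv
      = Sfn f0 f1 p π (n+1) xv := by
    rw [Sstep]
    unfold G1fn PiPost
    field_simp
    ring
  have hGne : G1fn f0 f1 p (xv n) (xv (n+1)) (PiPost f0 f1 p π n xv) ≠ 0 := by
    intro h
    apply hS2
    rw [← hG, h, zero_mul]
  have hG2 : G1fn f0 f1 p (xv n) (xv (n+1)) (PiPost f0 f1 p π n xv)
      = Sfn f0 f1 p π (n+1) xv / Sfn f0 f1 p π n xv := (eq_div_iff hS1).mpr hG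
  have hS2' : f1 (xv n) (xv (n+1)) * (Sfn f0 f1 p π n xv - (1-π) * p^(n+1) * L0)
        + (1-π) * p^(n+1) * L0 * f0 (xv n) (xv (n+1)) ≠ 0 := by rw [← Sstep]; exact hS2
  rw [hG2]
  unfold PiPost
  rw [Lstep0, Sstep]
  field_simp
  ring
end
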